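/- arXiv:2511.15149 — 4 statements merged into one kernel-verified Lean document; each statement's English description precedes it below -/
import Mathlib

section
/- Let n ≥ 1 be a natural number, let z be a complex number with Re(z) > 0, and let u, v be complex numbers with u^n ∈ 𝔻 and v ∈ 𝔻'. Then F(nz; u^n, v) = ∑_{α^n = 1} F(z; uα, v), where the sum runs over all n-th roots of unity α. -/
open Complex MeasureTheory Polynomial Set

/-- `t^z := exp(z · log t)` with `log t` the real logarithm. -/
noncomputable def tpow (z : ℂ) (t : ℝ) : ℂ := Complex.exp (z * Real.log t)

/-- The Herglotz–Zagier–Novikov function `F(z;u,v) = ∫₀¹ log(1 − u t^z)/(v⁻¹ − t) dt`. -/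
noncomputable def F (z u v : ℂ) : ℂ :=
  ∫ t in (0:ℝ)..1, Complex.log (1 - u * tpow z t) / (v⁻¹ - (t : ℂ))

lemma sum_nthRoots_pow (n : ℕ) (hn : 1 ≤ n) (k : ℕ) :
    ∑ α ∈ nthRootsFinset n (1 : ℂ), α ^ k = if n ∣ k then (n : ℂ) else 0 := by
  have hn0 : n ≠ 0 := by omega
  obtain ⟨ζ, hζ⟩ : ∃ ζ : ℂ, IsPrimitiveRoot ζ n := ⟨_, Complex.isPrimitiveRoot_exp n hn0⟩
  by_cases hdvd : n ∣ k
  · rw [if_pos hdvd]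
    obtain ⟨m, rfl⟩ := hdvd
    have : ∀ α ∈ nthRootsFinset n (1 : ℂ), α ^ (n * m) = 1 := by
      intro α hα
      rw [pow_mul, (mem_nthRootsFinset (by omega) 1).mp hα, one_pow]
    rw [Finset.sum_congr rfl this, Finset.sum_const, hζ.card_nthRootsFinset]
    simp
  · rw [if_neg hdvd]
    have hζmem : ζ ∈ nthRootsFinset n (1 : ℂ) :=
      (mem_nthRootsFinset (by omega) 1).mpr hζ.pow_eq_one
    have hζ0 : ζ ≠ 0 := hζ.ne_zero hn0
    have key : ζ ^ k * ∑ α ∈ nthRootsFinset n (1 : ℂ), α ^ k = ∑ α ∈ nthRootsFinset n (1 : ℂ), α ^ k := by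
      rw [Finset.mul_sum]
      refine Finset.sum_nbij' (fun α => ζ * α) (fun α => ζ⁻¹ * α) ?_ ?_ ?_ ?_ ?_
      · intro α hα; simpa using mul_mem_nthRootsFinset hζmem hα
      · intro α hα
        rw [← one_mul (1 : ℂ)]
        refine mul_mem_nthRootsFinset ?_ hα
        rw [mem_nthRootsFinset (by omega) 1, inv_pow, hζ.pow_eq_one, inv_one]
      · intro α hα; field_simp
      · intro α hα; field_simp
      · intro α hα; rw [mul_pow]
    have hζk : ζ ^ k ≠ 1 := fun h => hdvd ((hζ.pow_eq_one_iff_dvd k).mp h)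
    have h0 : (ζ ^ k - 1) * ∑ α ∈ nthRootsFinset n (1 : ℂ), α ^ k = 0 := by
      rw [sub_mul, one_mul, key, sub_self]
    exact (mul_eq_zero.mp h0).resolve_left (sub_ne_zero.mpr hζk)

lemma hasSum_real_neg_log {r : ℝ} (h0 : 0 ≤ r) (h : r < 1) :
    HasSum (fun k : ℕ => r ^ k / k) (-Real.log (1 - r)) := by
  have h1 := Real.hasSum_pow_div_log_of_abs_lt_one (x := r)
    (by rwa [_root_.abs_of_nonneg h0])
  have h1' : HasSum (fun n : ℕ => r ^ (n + 1) / ((n + 1 : ℕ) : ℝ))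
      (-Real.log (1 - r) - ∑ i ∈ Finset.range 1, r ^ i / (i : ℝ)) := by
    simpa using h1
  exact (hasSum_nat_add_iff' 1).mp h1'

lemma norm_log_one_sub_le {x : ℂ} (hx : ‖x‖ < 1) :
    ‖Complex.log (1 - x)‖ ≤ -Real.log (1 - ‖x‖) := by
  have h1 := Complex.hasSum_taylorSeries_neg_log hx
  have h2 := hasSum_real_neg_log (norm_nonneg x) hx
  have := h1.norm_le_of_bounded h2 ?_
  · simpa using this
  · intro k
    rcases Nat.eq_zero_or_pos k with rfl | hk
    · simp
    · rw [norm_div, norm_pow]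
      gcongr
      simpa using Nat.cast_nonneg k

lemma log_prod_eq (n : ℕ) (hn : 1 ≤ n) (u w : ℂ) (hu : ‖u‖ ≤ 1) (hw : ‖w‖ < 1) :
    ∑ α ∈ nthRootsFinset n (1 : ℂ), Complex.log (1 - u * α * w)
      = Complex.log (1 - u ^ n * w ^ n) := by
  have hn0 : n ≠ 0 := by omega
  have huw : ‖u * w‖ < 1 := by
    rw [norm_mul]
    calc ‖u‖ * ‖w‖ ≤ 1 * ‖w‖ := by gcongr
    _ = ‖w‖ := one_mul _
    _ < 1 := hw
  set f : ℕ → ℂ := fun k => if n ∣ k then (n : ℂ) * (u * w) ^ k / k else 0 with hf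
  have H1 : HasSum f (∑ α ∈ nthRootsFinset n (1 : ℂ), -Complex.log (1 - u * α * w)) := by
    have h1 : HasSum (fun k : ℕ => ∑ α ∈ nthRootsFinset n (1 : ℂ), (u * α * w) ^ k / k)
        (∑ α ∈ nthRootsFinset n (1 : ℂ), -Complex.log (1 - u * α * w)) := by
      refine hasSum_sum fun α hαm => Complex.hasSum_taylorSeries_neg_log ?_
      have hα1 : ‖α‖ = 1 :=
        Complex.norm_eq_one_of_pow_eq_one ((mem_nthRootsFinset (by omega) 1).mp hαm) hn0
      calc ‖u * α * w‖ = ‖u * w‖ := by rw [norm_mul, norm_mul, norm_mul, hα1, mul_one]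
      _ < 1 := huw
    convert h1 using 1
    funext k
    have hterm : ∀ α ∈ nthRootsFinset n (1 : ℂ), (u * α * w) ^ k / k = α ^ k * ((u * w) ^ k / k) := by
      intro α _; rw [mul_pow, mul_pow, mul_pow]; ring
    rw [Finset.sum_congr rfl hterm, ← Finset.sum_mul, sum_nthRoots_pow n hn k]
    simp only [hf]
    split_ifs with h
    · ring
    · simp
  have H2 : HasSum f (-Complex.log (1 - (u * w) ^ n)) := by
    have h2 : HasSum (fun m : ℕ => ((u * w) ^ n) ^ m / m) (-Complex.log (1 - (u * w) ^ n)) :=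
      Complex.hasSum_taylorSeries_neg_log
        (by rw [norm_pow]; exact pow_lt_one₀ (norm_nonneg _) huw hn0)
    have hinj : Function.Injective (fun m : ℕ => n * m) := fun a b h => by
      simpa [Nat.mul_right_cancel_iff, hn0] using
        Nat.eq_of_mul_eq_mul_left (by omega) h
    refine (Function.Injective.hasSum_iff hinj ?_).mp ?_
    · intro k hk
      simp only [hf]
      rw [if_neg]
      rintro ⟨m, rfl⟩
      exact hk (Set.mem_range.mpr ⟨m, rfl⟩)
    · convert h2 using 1
      funext m
      show f (n * m) = _
      rw [hf]
      simp only [if_pos (dvd_mul_right n m), ← pow_mul]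
      rcases Nat.eq_zero_or_pos m with rfl | hm
      · simp
      · have : ((n * m : ℕ) : ℂ) = (n : ℂ) * m := by push_cast; ring
        rw [this]
        have hnn : (n : ℂ) ≠ 0 := Nat.cast_ne_zero.mpr hn0
        have hmm : (m : ℂ) ≠ 0 := Nat.cast_ne_zero.mpr (by omega)
        field_simp
  have := H1.unique H2
  have h3 : ∑ α ∈ nthRootsFinset n (1 : ℂ), -Complex.log (1 - u * α * w)
      = -∑ α ∈ nthRootsFinset n (1 : ℂ), Complex.log (1 - u * α * w) := by
    rw [Finset.sum_neg_distrib]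
  rw [h3] at this
  rw [← mul_pow]
  exact neg_injective this

lemma norm_tpow (z : ℂ) {t : ℝ} (ht : 0 < t) : ‖tpow z t‖ = t ^ z.re := by
  rw [tpow, Complex.norm_exp, Real.rpow_def_of_pos ht]
  congr 1
  simp [Complex.mul_re, mul_comm]

lemma integrable_term (z w v : ℂ) (hz : 0 < z.re) (hw : ‖w‖ ≤ 1)
    (hv0 : v ≠ 0) (hv1 : ‖v‖ ≤ 1) (hv2 : v ≠ 1) :
    IntervalIntegrable (fun t : ℝ => Complex.log (1 - w * tpow z t) / (v⁻¹ - (t : ℂ)))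
      volume 0 1 := by
  have hden : ∀ t ∈ Icc (0:ℝ) 1, v⁻¹ - (t : ℂ) ≠ 0 := by
    intro t ht h
    have hvt : v⁻¹ = (t : ℂ) := by linear_combination h
    have h1 : ‖v⁻¹‖ = t := by
      rw [hvt, Complex.norm_real, Real.norm_eq_abs, _root_.abs_of_nonneg ht.1]
    have h2 : 1 ≤ ‖v⁻¹‖ := by
      rw [norm_inv]
      exact (one_le_inv₀ (norm_pos_iff.mpr hv0)).mpr hv1
    have ht1 : t = 1 := le_antisymm ht.2 (h1 ▸ h2)
    apply hv2
    have : v⁻¹ = 1 := by rw [hvt, ht1]; norm_num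
    simpa using congrArg (·⁻¹) this
  -- minimum of the denominator
  have hcont : ContinuousOn (fun t : ℝ => ‖v⁻¹ - (t:ℂ)‖) (Icc 0 1) :=
    (continuous_norm.comp (continuous_const.sub Complex.continuous_ofReal)).continuousOn
  obtain ⟨t₀, ht₀, hmin⟩ := isCompact_Icc.exists_isMinOn ⟨0, by norm_num⟩ hcont
  set m := ‖v⁻¹ - (t₀:ℂ)‖ with hm
  have hm0 : 0 < m := by
    rw [hm]
    exact norm_pos_iff.mpr (hden t₀ ht₀)
  set c := z.re with hc
  set C := -Real.log (min c 1) with hC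
  -- measurability
  have hmeas : Measurable (fun t : ℝ => Complex.log (1 - w * tpow z t) / (v⁻¹ - (t : ℂ))) := by
    apply Measurable.div
    · exact Complex.measurable_log.comp
        (measurable_const.sub (measurable_const.mul (Complex.measurable_exp.comp
          (measurable_const.mul (Complex.measurable_ofReal.comp Real.measurable_log)))))
    · exact measurable_const.sub Complex.measurable_ofReal
  rw [intervalIntegrable_iff_integrableOn_Ioc_of_le zero_le_one,
    integrableOn_Ioc_iff_integrableOn_Ioo]
  refine Integrable.mono' (g := fun t => (C + 2 * (1 - t) ^ (-2⁻¹ : ℝ)) / m) ?_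
    hmeas.aestronglyMeasurable.restrict ?_
  · -- integrability of the bound
    apply Integrable.div_const
    apply Integrable.add
    · exact (integrableOn_const_iff).mpr (Or.inr (by simp [Real.volume_Ioo]))
    · have h1 : IntervalIntegrable (fun t : ℝ => t ^ (-2⁻¹ : ℝ)) volume 0 1 :=
        intervalIntegral.intervalIntegrable_rpow' (by norm_num)
      have h2 := (h1.comp_sub_left 1)
      simp only [sub_zero, sub_self] at h2
      have h3 : IntegrableOn (fun t : ℝ => (1 - t) ^ (-2⁻¹ : ℝ)) (Ioo 0 1) volume := by
        have h2' : IntervalIntegrable (fun t : ℝ => (1 - t) ^ (-2⁻¹ : ℝ)) volume 0 1 := by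
          simpa using h2.symm
        exact ((intervalIntegrable_iff_integrableOn_Ioc_of_le zero_le_one).mp h2').mono_set
          Ioo_subset_Ioc_self
      exact (h3.const_mul 2)
  · -- the pointwise bound
    rw [ae_restrict_iff' measurableSet_Ioo]
    refine ae_of_all _ ?_
    intro t ht
    have ht0 : 0 < t := ht.1
    have ht1 : t < 1 := ht.2
    have htc : t ^ c < 1 := Real.rpow_lt_one ht0.le ht1 hz
    have htc0 : 0 < t ^ c := Real.rpow_pos_of_pos ht0 c
    have hxle : ‖w * tpow z t‖ ≤ t ^ c := by
      rw [norm_mul, norm_tpow z ht0]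
      calc ‖w‖ * t ^ c ≤ 1 * t ^ c := by gcongr
      _ = t ^ c := one_mul _
    have hxlt : ‖w * tpow z t‖ < 1 := lt_of_le_of_lt hxle htc
    have hlog1 : ‖Complex.log (1 - w * tpow z t)‖ ≤ -Real.log (1 - t ^ c) := by
      refine (norm_log_one_sub_le hxlt).trans ?_
      have : Real.log (1 - t ^ c) ≤ Real.log (1 - ‖w * tpow z t‖) :=
        Real.log_le_log (by linarith) (by linarith)
      linarith
    -- Bernoulli: min c 1 * (1 - t) ≤ 1 - t ^ c
    have hmc : 0 < min c 1 := lt_min hz one_pos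
    have hber : min c 1 * (1 - t) ≤ 1 - t ^ c := by
      rcases le_or_gt 1 c with h | h
      · have : t ^ c ≤ t ^ (1:ℝ) := Real.rpow_le_rpow_of_exponent_ge ht0 ht1.le h
        rw [Real.rpow_one] at this
        rw [min_eq_right h]
        linarith
      · have hb := rpow_one_add_le_one_add_mul_self (s := t - 1) (by linarith)
          hz.le h.le
        have h1t : (1 : ℝ) + (t - 1) = t := by ring
        rw [h1t] at hb
        rw [min_eq_left h.le]
        nlinarith [hb]
    have hlog2 : -Real.log (1 - t ^ c) ≤ C + 2 * (1 - t) ^ (-2⁻¹ : ℝ) := by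
      have hmul : Real.log (min c 1 * (1 - t)) ≤ Real.log (1 - t ^ c) :=
        Real.log_le_log (mul_pos hmc (by linarith)) hber
      rw [Real.log_mul hmc.ne' (by linarith)] at hmul
      -- -log (1 - t) ≤ 2 * (1 - t) ^ (-2⁻¹)
      have hs0 : 0 < 1 - t := by linarith
      have hrp : 0 < (1 - t) ^ (-2⁻¹ : ℝ) := Real.rpow_pos_of_pos hs0 _
      have hlr : Real.log ((1 - t) ^ (-2⁻¹ : ℝ)) = (-2⁻¹) * Real.log (1 - t) :=
        Real.log_rpow hs0 _
      have hle := Real.log_le_sub_one_of_pos hrp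
      rw [hlr] at hle
      rw [hC]
      linarith
    have hmden : m ≤ ‖v⁻¹ - (t : ℂ)‖ := hmin ⟨ht0.le, ht1.le⟩
    calc ‖Complex.log (1 - w * tpow z t) / (v⁻¹ - (t : ℂ))‖
        = ‖Complex.log (1 - w * tpow z t)‖ / ‖v⁻¹ - (t : ℂ)‖ := by
          rw [norm_div]
    _ ≤ (C + 2 * (1 - t) ^ (-2⁻¹ : ℝ)) / m := by
          have hC0 : (0:ℝ) ≤ C := by
            rw [hC]
            have := Real.log_nonpos (le_of_lt hmc) (min_le_right c 1)
            linarith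
          have h2pos : (0:ℝ) < (1 - t) ^ (-2⁻¹ : ℝ) := Real.rpow_pos_of_pos (by linarith) _
          exact div_le_div₀ (by linarith) (hlog1.trans hlog2) hm0 hmden

theorem statement0 (n : ℕ) (hn : 1 ≤ n) (z u v : ℂ) (hz : 0 < z.re)
    (hun0 : u ^ n ≠ 0) (hun1 : ‖u ^ n‖ ≤ 1)
    (hv0 : v ≠ 0) (hv1 : ‖v‖ ≤ 1) (hv2 : v ≠ 1) :
    F ((n : ℂ) * z) (u ^ n) v = ∑ α ∈ nthRootsFinset n (1 : ℂ), F z (u * α) v := by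
  have hn0 : n ≠ 0 := by omega
  have hu1 : ‖u‖ ≤ 1 := by
    have h : ‖u‖ ^ n ≤ 1 := by
      rw [← norm_pow]
      exact hun1
    exact (pow_le_one_iff_of_nonneg (norm_nonneg u) hn0).mp h
  have hint : ∀ α ∈ nthRootsFinset n (1 : ℂ), IntervalIntegrable
      (fun t : ℝ => Complex.log (1 - u * α * tpow z t) / (v⁻¹ - (t : ℂ))) volume 0 1 := by
    intro α hα
    have hα1 : ‖α‖ = 1 :=
      Complex.norm_eq_one_of_pow_eq_one ((mem_nthRootsFinset (by omega) 1).mp hα) hn0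
    exact integrable_term z (u * α) v hz (by rw [norm_mul, hα1, mul_one]; exact hu1)
      hv0 hv1 hv2
  unfold F
  rw [← intervalIntegral.integral_finset_sum hint]
  apply intervalIntegral.integral_congr_ae
  have hne : ∀ᵐ t : ℝ, t ≠ (1 : ℝ) := by
    rw [ae_iff]
    simp only [ne_eq, not_not]
    simp [Set.setOf_eq_eq_singleton]
  filter_upwards [hne] with t htne hmem
  rw [Set.uIoc_of_le (zero_le_one)] at hmem
  have ht0 : 0 < t := hmem.1
  have ht1 : t < 1 := lt_of_le_of_ne hmem.2 htne
  have hw : ‖tpow z t‖ < 1 := by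
    rw [norm_tpow z ht0]
    exact Real.rpow_lt_one ht0.le ht1 hz
  have key := log_prod_eq n hn u (tpow z t) hu1 hw
  have htp : tpow ((n : ℂ) * z) t = (tpow z t) ^ n := by
    rw [tpow, tpow, mul_assoc, Complex.exp_nat_mul]
  rw [htp, ← key, Finset.sum_div]
end

section
/- Let n ≥ 1 be a natural number, let z be a complex number with Re(z) > 0, and let u, v be complex numbers with u ∈ 𝔻 and v^n ∈ 𝔻'. Then F(z/n; u, v^n) = ∑_{α^n = 1} F(z; u, vα), where the sum runs over all n-th roots of unity α. -/
open Complex MeasureTheory Polynomial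

section Aux

lemma eval_deriv_prod (s : Finset ℂ) (x : ℂ) :
    eval x (derivative (∏ α ∈ s, (X - C α)))
    = ∑ α ∈ s, ∏ β ∈ s.erase α, (x - β) := by
  classical
  induction s using Finset.induction with
  | empty => simp
  | @insert a s has ih =>
    rw [Finset.prod_insert has, derivative_mul, eval_add, eval_mul, eval_mul, ih,
      Finset.sum_insert has]
    simp only [derivative_sub, derivative_X, derivative_C, sub_zero, eval_one, one_mul,
      Finset.erase_insert has, eval_prod, eval_sub, eval_X, eval_C]
    have : ∀ b ∈ s, ∏ β ∈ (insert a s).erase b, (x - β) = (x - a) * ∏ β ∈ s.erase b, (x - β) := by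
      intro b hb
      rw [Finset.erase_insert_of_ne (by rintro rfl; exact has hb), Finset.prod_insert
        (fun h => has (Finset.mem_of_mem_erase h))]
    rw [Finset.sum_congr rfl this, Finset.mul_sum]

lemma key_sum (n : ℕ) (hn : 1 ≤ n) (x : ℂ) (hx : x ^ n ≠ 1) :
    ∑ α ∈ nthRootsFinset n (1 : ℂ), (x - α)⁻¹ = n * x ^ (n - 1) / (x ^ n - 1) := by
  have hn0 : 0 < n := hn
  obtain ⟨ζ, hζ⟩ : ∃ ζ : ℂ, IsPrimitiveRoot ζ n :=
    ⟨_, Complex.isPrimitiveRoot_exp n (by omega)⟩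
  have hprod : (X ^ n - 1 : ℂ[X]) = ∏ α ∈ nthRootsFinset n (1 : ℂ), (X - C α) :=
    X_pow_sub_one_eq_prod hn0 hζ
  have hval : x ^ n - 1 = ∏ α ∈ nthRootsFinset n (1 : ℂ), (x - α) := by
    have := congrArg (eval x) hprod
    simpa [eval_prod] using this
  have hne : ∀ α ∈ nthRootsFinset n (1 : ℂ), x - α ≠ 0 := by
    intro α hα h
    rw [sub_eq_zero] at h
    subst h
    exact hx ((mem_nthRootsFinset hn0 (1 : ℂ)).mp hα)
  have hder : (n : ℂ) * x ^ (n - 1)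
      = ∑ α ∈ nthRootsFinset n (1 : ℂ), ∏ β ∈ (nthRootsFinset n (1 : ℂ)).erase α, (x - β) := by
    have := congrArg (fun p => eval x (derivative p)) hprod
    simp only [derivative_sub, derivative_one, derivative_X_pow, sub_zero, eval_mul,
      eval_pow, eval_X, eval_natCast, eval_C, eval_deriv_prod] at this
    exact this
  have hfull : (x ^ n - 1) ≠ 0 := sub_ne_zero.mpr hx
  rw [eq_div_iff hfull, Finset.sum_mul, hder]
  refine Finset.sum_congr rfl fun α hα => ?_
  rw [hval, ← Finset.mul_prod_erase _ _ hα, inv_mul_cancel_left₀ (hne α hα)]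

lemma vs_pow_ne_one (n : ℕ) (hn : 1 ≤ n) (v : ℂ) (hvn1 : ‖v ^ n‖ ≤ 1)
    (hvn2 : v ^ n ≠ 1) (s : ℝ) (hs0 : 0 ≤ s) (hs1 : s ≤ 1) :
    (v * (s : ℂ)) ^ n ≠ 1 := by
  intro h
  rw [mul_pow] at h
  have habs : ‖v ^ n‖ * s ^ n = 1 := by
    have := congrArg (‖·‖) h
    rw [norm_mul, norm_one] at this
    rwa [show ‖((s : ℂ)) ^ n‖ = s ^ n from by
      rw [norm_pow, Complex.norm_real, Real.norm_eq_abs, _root_.abs_of_nonneg hs0]] at this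
  have hsn1 : s ^ n ≤ 1 := pow_le_one₀ hs0 hs1
  have hsn0 : 0 ≤ s ^ n := pow_nonneg hs0 n
  have hs_eq : s ^ n = 1 := by nlinarith [norm_nonneg (v ^ n)]
  have hseq : s = 1 := by nlinarith [pow_le_of_le_one hs0 hs1 (by omega : n ≠ 0)]
  rw [hseq] at h
  simp at h
  exact hvn2 h

lemma sum_inv_eq (n : ℕ) (hn : 1 ≤ n) (v : ℂ) (hvn0 : v ^ n ≠ 0)
    (hvn1 : ‖v ^ n‖ ≤ 1) (hvn2 : v ^ n ≠ 1)
    (s : ℝ) (hs0 : 0 ≤ s) (hs1 : s ≤ 1) :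
    ∑ α ∈ nthRootsFinset n (1 : ℂ), ((v * α)⁻¹ - (s : ℂ))⁻¹
      = (n : ℂ) * (s : ℂ) ^ (n - 1) / ((v ^ n)⁻¹ - ((s : ℂ)) ^ n) := by
  have hn0 : 0 < n := hn
  have hv : v ≠ 0 := fun h => hvn0 (by simp [h, pow_eq_zero_iff (by omega : n ≠ 0)])
  have hx : (v * (s : ℂ)) ^ n ≠ 1 := vs_pow_ne_one n hn v hvn1 hvn2 s hs0 hs1
  have step1 : ∀ α ∈ nthRootsFinset n (1 : ℂ),
      ((v * α)⁻¹ - (s : ℂ))⁻¹ = -v * (v * (s : ℂ) - α⁻¹)⁻¹ := by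
    intro α hα
    have hαn : α ^ n = 1 := (mem_nthRootsFinset hn0 (1 : ℂ)).mp hα
    have hα0 : α ≠ 0 := fun h => by simp [h, zero_pow (by omega : n ≠ 0)] at hαn
    have : (v * α)⁻¹ - (s : ℂ) = -v⁻¹ * (v * (s : ℂ) - α⁻¹) := by
      field_simp
      ring
    rw [this, mul_inv, inv_neg, inv_inv]
  rw [Finset.sum_congr rfl step1, ← Finset.mul_sum]
  have step2 : ∑ α ∈ nthRootsFinset n (1 : ℂ), (v * (s : ℂ) - α⁻¹)⁻¹
      = ∑ α ∈ nthRootsFinset n (1 : ℂ), (v * (s : ℂ) - α)⁻¹ := by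
    refine Finset.sum_nbij' (fun α => α⁻¹) (fun α => α⁻¹) ?_ ?_ ?_ ?_ ?_
    · intro α hα
      have hαn : α ^ n = 1 := (mem_nthRootsFinset hn0 (1 : ℂ)).mp hα
      exact (mem_nthRootsFinset hn0 (1 : ℂ)).mpr (by rw [inv_pow, hαn, inv_one])
    · intro α hα
      have hαn : α ^ n = 1 := (mem_nthRootsFinset hn0 (1 : ℂ)).mp hα
      exact (mem_nthRootsFinset hn0 (1 : ℂ)).mpr (by rw [inv_pow, hαn, inv_one])
    · intro α hα; simp
    · intro α hα; simp
    · intro α hα; rfl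
  rw [step2, key_sum n hn _ hx]
  have hd1 : (v * (s : ℂ)) ^ n - 1 ≠ 0 := sub_ne_zero.mpr hx
  have hd2 : (v ^ n)⁻¹ - ((s : ℂ)) ^ n ≠ 0 := by
    intro h
    apply hx
    rw [sub_eq_zero] at h
    rw [mul_pow, ← h, mul_inv_cancel₀ hvn0]
  have hpow : v * v ^ (n - 1) = v ^ n := by
    rw [← pow_succ']
    congr 1
    omega
  rw [← mul_div_assoc, div_eq_div_iff hd1 hd2]
  have hspow : ((s : ℂ)) ^ n = (s : ℂ) * (s : ℂ) ^ (n - 1) := by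
    rw [← pow_succ']
    congr 1
    omega
  field_simp
  rw [mul_pow, mul_pow, ← hpow, hspow]
  ring

lemma log_II : IntervalIntegrable Real.log volume 0 1 := by
  have h2 : IntervalIntegrable (fun t : ℝ => 2 * t ^ (-(1/2) : ℝ)) volume 0 1 :=
    (intervalIntegral.intervalIntegrable_rpow' (by norm_num)).const_mul 2
  refine h2.mono_fun' Real.measurable_log.aestronglyMeasurable ?_
  filter_upwards [ae_restrict_mem measurableSet_uIoc] with t ht
  rw [Set.uIoc_of_le (zero_le_one' ℝ)] at ht
  obtain ⟨ht0, ht1⟩ := ht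
  have h1 : -Real.log t = Real.log t⁻¹ := (Real.log_inv t).symm
  have h3 : Real.log t⁻¹ = 2 * Real.log (Real.sqrt t⁻¹) := by
    rw [Real.log_sqrt (inv_nonneg.mpr ht0.le)]; ring
  have h4 : Real.log (Real.sqrt t⁻¹) ≤ Real.sqrt t⁻¹ :=
    (Real.log_le_sub_one_of_pos (Real.sqrt_pos.mpr (inv_pos.mpr ht0))).trans (by linarith)
  have h5 : Real.sqrt t⁻¹ = t ^ (-(1/2) : ℝ) := by
    rw [Real.sqrt_inv, Real.sqrt_eq_rpow, ← Real.rpow_neg ht0.le]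
  rw [Real.norm_eq_abs, abs_of_nonpos (Real.log_nonpos ht0.le ht1)]
  calc -Real.log t = 2 * Real.log (Real.sqrt t⁻¹) := by rw [h1, h3]
    _ ≤ 2 * (t ^ (-(1/2) : ℝ)) := by rw [← h5]; linarith

lemma numerator_II (z u : ℂ) (hz : 0 < z.re) (hu1 : ‖u‖ ≤ 1) :
    IntervalIntegrable (fun t : ℝ => Complex.log (1 - u * tpow z t)) volume 0 1 := by
  set r := z.re with hr
  set c := min r 1 with hc
  have hc0 : 0 < c := lt_min hz one_pos
  have hglog : IntervalIntegrable (fun t : ℝ => Real.log (1 - t)) volume 0 1 := by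
    have := (log_II.comp_sub_left 1).symm
    simpa using this
  have hg : IntervalIntegrable
      (fun t : ℝ => (Real.pi + Real.log 2 - Real.log c) - Real.log (1 - t)) volume 0 1 :=
    (_root_.intervalIntegrable_const).sub hglog
  have hm : Measurable (fun t : ℝ => Complex.log (1 - u * tpow z t)) := by
    apply Complex.measurable_log.comp
    exact measurable_const.sub (measurable_const.mul (Complex.measurable_exp.comp
      (measurable_const.mul (Complex.measurable_ofReal.comp Real.measurable_log))))
  refine hg.mono_fun' hm.aestronglyMeasurable ?_
  have h1 : ∀ᵐ t : ℝ ∂volume, t ≠ 1 := by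
    simp only [ae_iff, not_not, Set.setOf_eq_eq_singleton]
    exact measure_singleton 1
  filter_upwards [ae_restrict_mem measurableSet_uIoc, ae_restrict_of_ae h1] with t ht htne
  rw [Set.uIoc_of_le (zero_le_one' ℝ)] at ht
  obtain ⟨ht0, ht1'⟩ := ht
  have ht1 : t < 1 := lt_of_le_of_ne ht1' htne
  set T := tpow z t with hT
  have habsT : ‖T‖ = t ^ r := by
    rw [hT, tpow, Complex.norm_exp, Real.rpow_def_of_pos ht0]
    congr 1
    simp [Complex.mul_re, mul_comm, hr]
  have htr1 : t ^ r < 1 := Real.rpow_lt_one ht0.le ht1 hz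
  have htr0 : 0 < t ^ r := Real.rpow_pos_of_pos ht0 r
  have habsuT : ‖u * T‖ ≤ t ^ r := by
    rw [norm_mul, habsT]
    exact mul_le_of_le_one_left htr0.le hu1
  set w := 1 - u * T with hw
  have habs_low : 1 - t ^ r ≤ ‖w‖ := by
    have := norm_sub_norm_le (1 : ℂ) (u * T)
    simp only [norm_one] at this
    calc 1 - t ^ r ≤ 1 - ‖u * T‖ := by linarith
      _ ≤ ‖w‖ := this
  have habs_hi : ‖w‖ ≤ 2 := by
    calc ‖w‖ ≤ ‖(1 : ℂ)‖ + ‖u * T‖ := by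
          simpa using norm_sub_le (1 : ℂ) (u * T)
      _ ≤ 2 := by simp only [norm_one]; linarith
  have hpos : 0 < 1 - t ^ r := by linarith
  have hlog_hi : Real.log (‖w‖) ≤ Real.log 2 :=
    Real.log_le_log (lt_of_lt_of_le hpos habs_low) habs_hi
  have hlog_lo : Real.log (1 - t ^ r) ≤ Real.log (‖w‖) :=
    Real.log_le_log hpos habs_low
  have hkey : c * (1 - t) ≤ 1 - t ^ r := by
    rcases le_total 1 r with h | h
    · have : t ^ r ≤ t := by
        calc t ^ r ≤ t ^ (1 : ℝ) := Real.rpow_le_rpow_of_exponent_ge ht0 ht1.le h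
          _ = t := Real.rpow_one t
      rw [hc, min_eq_right h]
      linarith
    · have hgm : t ^ r * 1 ^ (1 - r) ≤ r * t + (1 - r) * 1 :=
        Real.geom_mean_le_arith_mean2_weighted hz.le (by linarith) ht0.le zero_le_one
          (by ring)
      rw [Real.one_rpow, mul_one] at hgm
      rw [hc, min_eq_left h]
      nlinarith
  have hclog : Real.log (c * (1 - t)) = Real.log c + Real.log (1 - t) :=
    Real.log_mul hc0.ne' (by linarith)
  have hkey' : Real.log c + Real.log (1 - t) ≤ Real.log (1 - t ^ r) := by
    rw [← hclog]
    exact Real.log_le_log (mul_pos hc0 (by linarith)) hkey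
  have hlog2 : 0 ≤ Real.log 2 := Real.log_nonneg one_le_two
  have hlogneg : Real.log (1 - t ^ r) ≤ 0 := Real.log_nonpos (by linarith) (by linarith)
  have habs_log : |Real.log (‖w‖)| ≤ Real.log 2 - Real.log (1 - t ^ r) :=
    abs_le.mpr ⟨by linarith, by linarith⟩
  calc ‖Complex.log w‖ ≤ |(Complex.log w).re| + |(Complex.log w).im| :=
        Complex.norm_le_abs_re_add_abs_im _
    _ = |Real.log (‖w‖)| + |Complex.arg w| := by rw [Complex.log_re, Complex.log_im]
    _ ≤ (Real.log 2 - Real.log (1 - t ^ r)) + Real.pi := by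
        have := Complex.abs_arg_le_pi w
        linarith
    _ ≤ (Real.pi + Real.log 2 - Real.log c) - Real.log (1 - t) := by linarith

lemma denom_ne (w : ℂ) (hw0 : w ≠ 0) (hw1 : ‖w‖ ≤ 1) (hw2 : w ≠ 1)
    (t : ℝ) (ht0 : 0 ≤ t) (ht1 : t ≤ 1) : w⁻¹ - (t : ℂ) ≠ 0 := by
  intro hzero
  rw [sub_eq_zero] at hzero
  have h1 : ‖w⁻¹‖ = |t| := by rw [hzero, Complex.norm_real, Real.norm_eq_abs]
  rw [norm_inv] at h1
  have hw0' : 0 < ‖w‖ := norm_pos_iff.mpr hw0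
  have h2 : (1:ℝ) ≤ ‖w‖⁻¹ := (one_le_inv₀ hw0').mpr hw1
  rw [h1, _root_.abs_of_nonneg ht0] at h2
  have ht1' : t = 1 := le_antisymm ht1 h2
  apply hw2
  rw [ht1'] at hzero
  have : w⁻¹ = 1 := by simpa using hzero
  rwa [inv_eq_one] at this

lemma integrand_II (z u w : ℂ) (hz : 0 < z.re) (hu1 : ‖u‖ ≤ 1)
    (hw0 : w ≠ 0) (hw1 : ‖w‖ ≤ 1) (hw2 : w ≠ 1) :
    IntervalIntegrable (fun t : ℝ => Complex.log (1 - u * tpow z t) / (w⁻¹ - (t : ℂ)))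
      volume 0 1 := by
  simp only [div_eq_mul_inv]
  have hne : ∀ t ∈ Set.uIcc (0:ℝ) 1, w⁻¹ - (t : ℂ) ≠ 0 := by
    intro t ht
    rw [Set.uIcc_of_le (zero_le_one' ℝ)] at ht
    exact denom_ne w hw0 hw1 hw2 t ht.1 ht.2
  exact (numerator_II z u hz hu1).mul_continuousOn
    (((continuous_const.sub Complex.continuous_ofReal).continuousOn).inv₀ hne)

lemma integrand_contOn (z u w : ℂ) (hz : 0 < z.re) (hu1 : ‖u‖ ≤ 1)
    (hw0 : w ≠ 0) (hw1 : ‖w‖ ≤ 1) (hw2 : w ≠ 1) :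
    ContinuousOn (fun t : ℝ => Complex.log (1 - u * tpow z t) / (w⁻¹ - (t : ℂ)))
      (Set.Ioo (0:ℝ) 1) := by
  intro t ht
  obtain ⟨ht0, ht1⟩ := ht
  apply ContinuousAt.continuousWithinAt
  have hinner : ContinuousAt (fun t : ℝ => 1 - u * tpow z t) t := by
    apply continuousAt_const.sub
    apply continuousAt_const.mul
    exact Complex.continuous_exp.continuousAt.comp
      (continuousAt_const.mul
        (Complex.continuous_ofReal.continuousAt.comp (Real.continuousAt_log ht0.ne')))
  have habsT : ‖tpow z t‖ = t ^ z.re := by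
    rw [tpow, Complex.norm_exp, Real.rpow_def_of_pos ht0]
    congr 1
    simp [Complex.mul_re, mul_comm]
  have htr1 : t ^ z.re < 1 := Real.rpow_lt_one ht0.le ht1 hz
  have htr0 : 0 < t ^ z.re := Real.rpow_pos_of_pos ht0 z.re
  have hslit : (1 - u * tpow z t) ∈ Complex.slitPlane := by
    rw [Complex.mem_slitPlane_iff]
    left
    have h1 : ‖u * tpow z t‖ ≤ t ^ z.re := by
      rw [norm_mul, habsT]
      exact mul_le_of_le_one_left htr0.le hu1
    have h2 : (u * tpow z t).re ≤ ‖u * tpow z t‖ := Complex.re_le_norm _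
    simp only [Complex.sub_re, Complex.one_re]
    linarith
  exact (hinner.clog hslit).div
    ((continuous_const.sub Complex.continuous_ofReal).continuousAt)
    (denom_ne w hw0 hw1 hw2 t ht0.le ht1.le)

lemma pointwise_eq (n : ℕ) (hn : 1 ≤ n) (z u v : ℂ) (hvn0 : v ^ n ≠ 0)
    (hvn1 : ‖v ^ n‖ ≤ 1) (hvn2 : v ^ n ≠ 1)
    (s : ℝ) (hs : s ∈ Set.Icc (0:ℝ) 1) :
    ((n : ℝ) * s ^ (n - 1)) •
      (Complex.log (1 - u * tpow (z / (n : ℂ)) (s ^ n)) / ((v ^ n)⁻¹ - ((s ^ n : ℝ) : ℂ)))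
    = ∑ α ∈ nthRootsFinset n (1 : ℂ),
        Complex.log (1 - u * tpow z s) / ((v * α)⁻¹ - (s : ℂ)) := by
  have hnC : (n : ℂ) ≠ 0 := Nat.cast_ne_zero.mpr (by omega)
  have htp : tpow (z / (n : ℂ)) (s ^ n) = tpow z s := by
    unfold tpow
    rw [Real.log_pow]
    congr 1
    push_cast
    field_simp
  rw [htp]
  simp only [div_eq_mul_inv, ← Finset.mul_sum]
  have := sum_inv_eq n hn v hvn0 hvn1 hvn2 s hs.1 hs.2
  simp only [div_eq_mul_inv] at this
  rw [this, Complex.real_smul]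
  push_cast
  ring

end Aux

theorem statement1 (n : ℕ) (hn : 1 ≤ n) (z u v : ℂ) (hz : 0 < z.re)
    (hu0 : u ≠ 0) (hu1 : ‖u‖ ≤ 1)
    (hvn0 : v ^ n ≠ 0) (hvn1 : ‖v ^ n‖ ≤ 1) (hvn2 : v ^ n ≠ 1) :
    F (z / (n : ℂ)) u (v ^ n) = ∑ α ∈ nthRootsFinset n (1 : ℂ), F z u (v * α) := by
  have hn0 : 0 < n := hn
  have hnne : n ≠ 0 := by omega
  have hv0 : v ≠ 0 := fun h => hvn0 (by simp [h, zero_pow hnne])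
  have hznre : 0 < (z / (n : ℂ)).re := by
    rw [show ((n : ℂ)) = ((n : ℝ) : ℂ) from by push_cast; rfl, Complex.div_ofReal_re]
    have : (0:ℝ) < n := by exact_mod_cast hn0
    positivity
  have hαfacts : ∀ α ∈ nthRootsFinset n (1 : ℂ),
      v * α ≠ 0 ∧ ‖v * α‖ ≤ 1 ∧ v * α ≠ 1 := by
    intro α hα
    have hαn : α ^ n = 1 := (mem_nthRootsFinset hn0 (1 : ℂ)).mp hα
    have hα0 : α ≠ 0 := fun h => by simp [h, zero_pow hnne] at hαn
    have hαabs : ‖α‖ = 1 := Complex.norm_eq_one_of_pow_eq_one hαn hnne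
    have hvabs : ‖v‖ ≤ 1 := by
      have h1 : ‖v‖ ^ n ≤ 1 := by rw [← norm_pow]; exact hvn1
      exact (pow_le_one_iff_of_nonneg (norm_nonneg v) hnne).mp h1
    refine ⟨mul_ne_zero hv0 hα0, ?_, ?_⟩
    · rw [norm_mul, hαabs, mul_one]; exact hvabs
    · intro h
      apply hvn2
      have h2 := congrArg (· ^ n) h
      simpa [mul_pow, hαn] using h2
  have hIα : ∀ α ∈ nthRootsFinset n (1 : ℂ),
      IntervalIntegrable
        (fun s : ℝ => Complex.log (1 - u * tpow z s) / ((v * α)⁻¹ - (s : ℂ))) volume 0 1 := by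
    intro α hα
    obtain ⟨h1, h2, h3⟩ := hαfacts α hα
    exact integrand_II z u (v * α) hz hu1 h1 h2 h3
  set g : ℝ → ℂ := fun t => Complex.log (1 - u * tpow (z / (n : ℂ)) t) / ((v ^ n)⁻¹ - (t : ℂ))
    with hgdef
  have himage : (fun s : ℝ => s ^ n) '' Set.Icc 0 1 = Set.Icc 0 1 := by
    apply Set.Subset.antisymm
    · rintro _ ⟨s, hs, rfl⟩
      exact ⟨pow_nonneg hs.1 n, pow_le_one₀ hs.1 hs.2⟩
    · have h := intermediate_value_Icc (zero_le_one' ℝ)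
        ((continuous_pow n).continuousOn (s := Set.Icc 0 1))
      simpa [one_pow, zero_pow hnne] using h
  have hgI : IntervalIntegrable g volume 0 1 :=
    integrand_II (z / (n : ℂ)) u (v ^ n) hznre hu1 hvn0 hvn1 hvn2
  have hgIcc : IntegrableOn g (Set.Icc 0 1) := by
    rw [integrableOn_Icc_iff_integrableOn_Ioc]
    exact (intervalIntegrable_iff_integrableOn_Ioc_of_le (zero_le_one' ℝ)).mp hgI
  have hgcont : ContinuousOn g (Set.Ioo 0 1) :=
    integrand_contOn (z / (n : ℂ)) u (v ^ n) hznre hu1 hvn0 hvn1 hvn2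
  -- hypotheses for substitution
  have hf : ContinuousOn (fun s : ℝ => s ^ n) (Set.uIcc 0 1) := (continuous_pow n).continuousOn
  have hff' : ∀ x ∈ Set.Ioo (min (0:ℝ) 1) (max 0 1),
      HasDerivWithinAt (fun s : ℝ => s ^ n) ((n : ℝ) * x ^ (n - 1)) (Set.Ioi x) x := by
    intro x _
    exact (hasDerivAt_pow n x).hasDerivWithinAt
  have hgcont' : ContinuousOn g ((fun s : ℝ => s ^ n) '' Set.Ioo (min 0 1) (max 0 1)) := by
    apply hgcont.mono
    rintro _ ⟨s, hs, rfl⟩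
    rw [min_eq_left (zero_le_one' ℝ), max_eq_right (zero_le_one' ℝ)] at hs
    exact ⟨pow_pos hs.1 n, pow_lt_one₀ hs.1.le hs.2 hnne⟩
  have hg1 : IntegrableOn g ((fun s : ℝ => s ^ n) '' Set.uIcc 0 1) := by
    rw [Set.uIcc_of_le (zero_le_one' ℝ), himage]
    exact hgIcc
  have hFsum : IntegrableOn
      (fun s : ℝ => ∑ α ∈ nthRootsFinset n (1 : ℂ),
        Complex.log (1 - u * tpow z s) / ((v * α)⁻¹ - (s : ℂ))) (Set.Icc 0 1) := by
    apply integrable_finset_sum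
    intro α hα
    have h := (intervalIntegrable_iff_integrableOn_Ioc_of_le (zero_le_one' ℝ)).mp (hIα α hα)
    exact (integrableOn_Icc_iff_integrableOn_Ioc).mpr h
  have hEq : Set.EqOn
      (fun x : ℝ => ((n : ℝ) * x ^ (n - 1)) • (g ∘ fun s : ℝ => s ^ n) x)
      (fun s : ℝ => ∑ α ∈ nthRootsFinset n (1 : ℂ),
        Complex.log (1 - u * tpow z s) / ((v * α)⁻¹ - (s : ℂ)))
      (Set.Icc 0 1) := by
    intro s hs
    show ((n : ℝ) * s ^ (n - 1)) • g (s ^ n) = _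
    exact pointwise_eq n hn z u v hvn0 hvn1 hvn2 s hs
  have hg2 : IntegrableOn
      (fun x : ℝ => ((n : ℝ) * x ^ (n - 1)) • (g ∘ fun s : ℝ => s ^ n) x) (Set.uIcc 0 1) := by
    rw [Set.uIcc_of_le (zero_le_one' ℝ)]
    exact hFsum.congr_fun (fun s hs => (hEq hs).symm) measurableSet_Icc
  have hsub := intervalIntegral.integral_comp_smul_deriv''' (a := (0:ℝ)) (b := 1)
    (f := fun s : ℝ => s ^ n) (f' := fun x : ℝ => (n : ℝ) * x ^ (n - 1)) (g := g)
    hf hff' hgcont' hg1 hg2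
  simp only [zero_pow hnne, one_pow] at hsub
  calc F (z / (n : ℂ)) u (v ^ n) = ∫ t in (0:ℝ)..1, g t := rfl
    _ = ∫ x in (0:ℝ)..1, ((n : ℝ) * x ^ (n - 1)) • (g ∘ fun s : ℝ => s ^ n) x := hsub.symm
    _ = ∫ x in (0:ℝ)..1, ∑ α ∈ nthRootsFinset n (1 : ℂ),
          Complex.log (1 - u * tpow z x) / ((v * α)⁻¹ - (x : ℂ)) := by
        apply intervalIntegral.integral_congr
        intro s hs
        rw [Set.uIcc_of_le (zero_le_one' ℝ)] at hs
        exact hEq hs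
    _ = ∑ α ∈ nthRootsFinset n (1 : ℂ),
          ∫ x in (0:ℝ)..1, Complex.log (1 - u * tpow z x) / ((v * α)⁻¹ - (x : ℂ)) :=
        intervalIntegral.integral_finset_sum hIα
    _ = ∑ α ∈ nthRootsFinset n (1 : ℂ), F z u (v * α) := rfl
end

section
/- Let z be a complex number with Re(z) > 0 and let u, v, w be nonzero complex numbers with |u| < 1, |v| < 1, and |w| < 1. Then F(z;u,v,w) = ∑_{m=1}^∞ ∑_{n=1}^∞ ∑_{k=1}^∞ u^m w^n v^k / (m·n·(mz + nz + k)). -/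
open Complex MeasureTheory
open scoped ENNReal NNReal

/-- `F(z;u,v,w) = ∫₀¹ log(1 − u t^z) log(1 − w t^z)/(v⁻¹ − t) dt`. -/
noncomputable def F3 (z u v w : ℂ) : ℂ :=
  ∫ t in (0:ℝ)..1,
    Complex.log (1 - u * tpow z t) * Complex.log (1 - w * tpow z t) / (v⁻¹ - (t : ℂ))

namespace St3

noncomputable def cf (u v w : ℂ) (p : ℕ × ℕ × ℕ) : ℂ :=
  u ^ (p.1 + 1) * w ^ (p.2.1 + 1) * v ^ (p.2.2 + 1) / (((p.1 : ℂ) + 1) * ((p.2.1 : ℂ) + 1))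

noncomputable def ex (z : ℂ) (p : ℕ × ℕ × ℕ) : ℂ :=
  ((p.1 : ℂ) + 1) * z + ((p.2.1 : ℂ) + 1) * z + (p.2.2 : ℂ)

lemma ex_re_nonneg {z : ℂ} (hz : 0 < z.re) (p : ℕ × ℕ × ℕ) : 0 ≤ (ex z p).re := by
  simp only [ex, Complex.add_re, Complex.mul_re, Complex.natCast_re, Complex.natCast_im,
    Complex.one_re, Complex.one_im, Complex.add_im, add_zero, zero_mul, sub_zero]
  positivity

lemma norm_tpow_le_one {z : ℂ} (hz : 0 ≤ z.re) {t : ℝ} (ht0 : 0 < t) (ht1 : t ≤ 1) :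
    ‖tpow z t‖ ≤ 1 := by
  rw [tpow, Complex.norm_exp]
  have h : (z * (Real.log t : ℂ)).re = z.re * Real.log t := by
    simp [Complex.mul_re]
  rw [h]
  have hlog : Real.log t ≤ 0 := Real.log_nonpos ht0.le ht1
  exact Real.exp_le_one_iff.2 (mul_nonpos_of_nonneg_of_nonpos hz hlog)

lemma one_le_norm_natCast_add_one (m : ℕ) : (1 : ℝ) ≤ ‖(m : ℂ) + 1‖ := by
  have h : ((m : ℂ) + 1) = ((m + 1 : ℕ) : ℂ) := by push_cast; ring
  rw [h, Complex.norm_natCast]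
  exact_mod_cast Nat.succ_le_succ (Nat.zero_le m)

lemma one_le_norm_ex_add_one {z : ℂ} (hz : 0 < z.re) (p : ℕ × ℕ × ℕ) :
    (1 : ℝ) ≤ ‖ex z p + 1‖ := by
  have h1 : (1 : ℝ) ≤ (ex z p + 1).re := by
    rw [Complex.add_re, Complex.one_re]
    have := ex_re_nonneg hz p
    linarith
  exact h1.trans (Complex.re_le_norm _)

lemma norm_cf_le (u v w : ℂ) (p : ℕ × ℕ × ℕ) :
    ‖cf u v w p‖ ≤ ‖u‖ ^ (p.1 + 1) * (‖w‖ ^ (p.2.1 + 1) * ‖v‖ ^ (p.2.2 + 1)) := by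
  rw [cf, norm_div, norm_mul, norm_mul, norm_pow, norm_pow, norm_pow]
  have hd : (1 : ℝ) ≤ ‖((p.1 : ℂ) + 1) * ((p.2.1 : ℂ) + 1)‖ := by
    rw [norm_mul]
    exact one_le_mul_of_one_le_of_one_le (one_le_norm_natCast_add_one _)
      (one_le_norm_natCast_add_one _)
  calc ‖u‖ ^ (p.1 + 1) * ‖w‖ ^ (p.2.1 + 1) * ‖v‖ ^ (p.2.2 + 1) / ‖((p.1 : ℂ) + 1) * ((p.2.1 : ℂ) + 1)‖
      ≤ ‖u‖ ^ (p.1 + 1) * ‖w‖ ^ (p.2.1 + 1) * ‖v‖ ^ (p.2.2 + 1) := by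
        apply div_le_self (by positivity) hd
    _ = ‖u‖ ^ (p.1 + 1) * (‖w‖ ^ (p.2.1 + 1) * ‖v‖ ^ (p.2.2 + 1)) := by ring

lemma summable_geo_succ {r : ℝ} (h0 : 0 ≤ r) (h1 : r < 1) :
    Summable (fun m : ℕ => r ^ (m + 1)) := by
  simpa [pow_succ'] using (summable_geometric_of_lt_one h0 h1).mul_left r

lemma summable_triple {a b c : ℝ} (ha0 : 0 ≤ a) (hb0 : 0 ≤ b) (hc0 : 0 ≤ c)
    (ha : a < 1) (hb : b < 1) (hc : c < 1) :
    Summable (fun p : ℕ × ℕ × ℕ =>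
      a ^ (p.1 + 1) * (b ^ (p.2.1 + 1) * c ^ (p.2.2 + 1))) := by
  have hU := summable_geo_succ ha0 ha
  have hV := summable_geo_succ hc0 hc
  have hW := summable_geo_succ hb0 hb
  have hWV : Summable (fun q : ℕ × ℕ => b ^ (q.1 + 1) * c ^ (q.2 + 1)) :=
    Summable.mul_of_nonneg (f := fun m : ℕ => b ^ (m + 1)) (g := fun m : ℕ => c ^ (m + 1))
      hW hV (Pi.le_def.mpr fun _ => pow_nonneg hb0 _) (Pi.le_def.mpr fun _ => pow_nonneg hc0 _)
  exact Summable.mul_of_nonneg (f := fun m : ℕ => a ^ (m + 1))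
    (g := fun q : ℕ × ℕ => b ^ (q.1 + 1) * c ^ (q.2 + 1)) hU hWV
    (Pi.le_def.mpr fun _ => pow_nonneg ha0 _)
    (Pi.le_def.mpr fun _ => mul_nonneg (pow_nonneg hb0 _) (pow_nonneg hc0 _))

lemma hasSum_log_term {x : ℂ} (hx : ‖x‖ < 1) :
    HasSum (fun m : ℕ => x ^ (m + 1) / ((m : ℂ) + 1)) (-(Complex.log (1 - x))) := by
  have h0 := Complex.hasSum_taylorSeries_neg_log hx
  have h1 := (hasSum_nat_add_iff (f := fun n : ℕ => x ^ n / (n : ℂ)) 1).2 (by simpa using h0)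
  convert h1 using 2 with m
  · rfl
  · push_cast
    ring

lemma summable_norm_log_term {x : ℂ} (hx : ‖x‖ < 1) :
    Summable (fun m : ℕ => ‖x ^ (m + 1) / ((m : ℂ) + 1)‖) := by
  refine Summable.of_nonneg_of_le (fun m => norm_nonneg _) (fun m => ?_)
    (summable_geo_succ (norm_nonneg x) hx)
  rw [norm_div, norm_pow]
  exact div_le_self (by positivity) (one_le_norm_natCast_add_one m)

lemma hasSum_pointwise (z u v w : ℂ) (hz : 0 < z.re) (hv0 : v ≠ 0)
    (hu : ‖u‖ < 1) (hv : ‖v‖ < 1) (hw : ‖w‖ < 1)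
    {t : ℝ} (ht0 : 0 < t) (ht1 : t ≤ 1) :
    HasSum (fun p : ℕ × ℕ × ℕ => cf u v w p * tpow (ex z p) t)
      (Complex.log (1 - u * tpow z t) * Complex.log (1 - w * tpow z t) / (v⁻¹ - (t : ℂ))) := by
  set s : ℂ := tpow z t with hs_def
  have hs : ‖s‖ ≤ 1 := norm_tpow_le_one hz.le ht0 ht1
  have hus : ‖u * s‖ < 1 := by
    rw [norm_mul]
    exact (mul_le_of_le_one_right (norm_nonneg u) hs).trans_lt hu
  have hws : ‖w * s‖ < 1 := by
    rw [norm_mul]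
    exact (mul_le_of_le_one_right (norm_nonneg w) hs).trans_lt hw
  have htc : ‖(t : ℂ)‖ ≤ 1 := by
    rw [Complex.norm_real, Real.norm_eq_abs, abs_of_pos ht0]; exact ht1
  have hvt : ‖v * (t : ℂ)‖ < 1 := by
    rw [norm_mul]
    exact (mul_le_of_le_one_right (norm_nonneg v) htc).trans_lt hv
  -- the three one-variable sums
  have hA := hasSum_log_term hus
  have hB := hasSum_log_term hws
  have hC : HasSum (fun k : ℕ => v ^ (k + 1) * (t : ℂ) ^ k) ((v⁻¹ - (t : ℂ))⁻¹) := by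
    have h0 := (hasSum_geometric_of_norm_lt_one hvt).mul_left v
    have hne : (1 : ℂ) - v * t ≠ 0 := by
      intro h
      have : v * (t : ℂ) = 1 := by linear_combination -h
      rw [this] at hvt; simp at hvt
    have hval : v * (1 - v * (t : ℂ))⁻¹ = (v⁻¹ - (t : ℂ))⁻¹ := by
      have h2 : v⁻¹ - (t : ℂ) = v⁻¹ * (1 - v * t) := by
        field_simp
      rw [h2, mul_inv, inv_inv]
    have hterm : (fun k : ℕ => v * (v * (t : ℂ)) ^ k) = fun k => v ^ (k + 1) * (t : ℂ) ^ k := by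
      funext k
      rw [mul_pow, pow_succ]
      ring
    rw [← hval, ← hterm]
    exact h0
  have SA := summable_norm_log_term hus
  have SB := summable_norm_log_term hws
  have SC : Summable (fun k : ℕ => ‖v ^ (k + 1) * (t : ℂ) ^ k‖) := by
    refine Summable.of_nonneg_of_le (fun k => norm_nonneg _) (fun k => ?_)
      (summable_geo_succ (norm_nonneg v) hv)
    rw [norm_mul, norm_pow, norm_pow]
    exact mul_le_of_le_one_right (by positivity) (pow_le_one₀ (norm_nonneg _) htc)

  have PAB : Summable (fun q : ℕ × ℕ =>
      (u * s) ^ (q.1 + 1) / ((q.1 : ℂ) + 1) * ((w * s) ^ (q.2 + 1) / ((q.2 : ℂ) + 1))) :=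
    summable_mul_of_summable_norm (f := fun m : ℕ => (u * s) ^ (m + 1) / ((m : ℂ) + 1))
      (g := fun n : ℕ => (w * s) ^ (n + 1) / ((n : ℂ) + 1)) SA SB
  have hAB := HasSum.mul (f := fun m : ℕ => (u * s) ^ (m + 1) / ((m : ℂ) + 1))
      (g := fun n : ℕ => (w * s) ^ (n + 1) / ((n : ℂ) + 1)) hA hB PAB
  have SAB : Summable (fun q : ℕ × ℕ =>
      ‖(u * s) ^ (q.1 + 1) / ((q.1 : ℂ) + 1) * ((w * s) ^ (q.2 + 1) / ((q.2 : ℂ) + 1))‖) :=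
    Summable.mul_norm (f := fun m : ℕ => (u * s) ^ (m + 1) / ((m : ℂ) + 1))
      (g := fun n : ℕ => (w * s) ^ (n + 1) / ((n : ℂ) + 1)) SA SB
  have PABC : Summable (fun q : (ℕ × ℕ) × ℕ =>
      (u * s) ^ (q.1.1 + 1) / ((q.1.1 : ℂ) + 1) * ((w * s) ^ (q.1.2 + 1) / ((q.1.2 : ℂ) + 1))
        * (v ^ (q.2 + 1) * (t : ℂ) ^ q.2)) :=
    summable_mul_of_summable_norm
      (f := fun q : ℕ × ℕ =>
        (u * s) ^ (q.1 + 1) / ((q.1 : ℂ) + 1) * ((w * s) ^ (q.2 + 1) / ((q.2 : ℂ) + 1)))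
      (g := fun k : ℕ => v ^ (k + 1) * (t : ℂ) ^ k) SAB SC
  have hABC := HasSum.mul
      (f := fun q : ℕ × ℕ =>
        (u * s) ^ (q.1 + 1) / ((q.1 : ℂ) + 1) * ((w * s) ^ (q.2 + 1) / ((q.2 : ℂ) + 1)))
      (g := fun k : ℕ => v ^ (k + 1) * (t : ℂ) ^ k) hAB hC PABC
  -- reindex through prodAssoc
  rw [show Complex.log (1 - u * s) * Complex.log (1 - w * s) / (v⁻¹ - (t : ℂ))
      = -Complex.log (1 - u * s) * -Complex.log (1 - w * s) * (v⁻¹ - (t : ℂ))⁻¹ by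
    rw [neg_mul_neg, div_eq_mul_inv]]
  refine (Equiv.prodAssoc ℕ ℕ ℕ).hasSum_iff.1 ?_
  have hfun : ((fun p : ℕ × ℕ × ℕ => cf u v w p * tpow (ex z p) t) ∘ (Equiv.prodAssoc ℕ ℕ ℕ))
      = fun q : (ℕ × ℕ) × ℕ =>
        (u * s) ^ (q.1.1 + 1) / ((q.1.1 : ℂ) + 1) * ((w * s) ^ (q.1.2 + 1) / ((q.1.2 : ℂ) + 1))
          * (v ^ (q.2 + 1) * (t : ℂ) ^ q.2) := by
    funext q
    obtain ⟨⟨m, n⟩, k⟩ := q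
    have hexp : tpow (ex z (m, n, k)) t = s ^ (m + 1) * s ^ (n + 1) * (t : ℂ) ^ k := by
      rw [ex, tpow, add_mul, add_mul, Complex.exp_add, Complex.exp_add, hs_def, tpow]
      congr 1
      · congr 1
        · rw [mul_assoc, show ((m : ℂ) + 1) = ((m + 1 : ℕ) : ℂ) by push_cast; ring,
            Complex.exp_nat_mul]
        · rw [mul_assoc, show ((n : ℂ) + 1) = ((n + 1 : ℕ) : ℂ) by push_cast; ring,
            Complex.exp_nat_mul]
      · rw [Complex.exp_nat_mul, ← Complex.ofReal_exp, Real.exp_log ht0]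
    show cf u v w (m, n, k) * tpow (ex z (m, n, k)) t = _
    rw [hexp, cf]
    simp only
    have hm : ((m : ℂ) + 1) ≠ 0 := Nat.cast_add_one_ne_zero m
    have hn : ((n : ℂ) + 1) ≠ 0 := Nat.cast_add_one_ne_zero n
    field_simp
    ring
  rw [hfun]
  exact hABC

end St3

open St3 Set in
theorem statement3 (z u v w : ℂ) (hz : 0 < z.re)
    (hu0 : u ≠ 0) (hv0 : v ≠ 0) (hw0 : w ≠ 0)
    (hu : ‖u‖ < 1) (hv : ‖v‖ < 1) (hw : ‖w‖ < 1) :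
    F3 z u v w = ∑' m : ℕ, ∑' n : ℕ, ∑' k : ℕ,
      u ^ (m + 1) * w ^ (n + 1) * v ^ (k + 1) /
        (((m : ℂ) + 1) * ((n : ℂ) + 1) *
          (((m : ℂ) + 1) * z + ((n : ℂ) + 1) * z + ((k : ℂ) + 1))) := by
  have hu' : ‖u‖ < 1 := hu
  have hv' : ‖v‖ < 1 := hv
  have hw' : ‖w‖ < 1 := hw
  -- summability facts
  have Sgeo := summable_triple (norm_nonneg u) (norm_nonneg w) (norm_nonneg v) hu' hw' hv'
  have hscf : Summable (fun p : ℕ × ℕ × ℕ => ‖cf u v w p‖) :=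
    Summable.of_nonneg_of_le (fun p => norm_nonneg _) (norm_cf_le u v w) Sgeo
  have hsterm : Summable (fun p : ℕ × ℕ × ℕ => cf u v w p / (ex z p + 1)) := by
    refine Summable.of_norm_bounded Sgeo (fun p => ?_)
    rw [norm_div]
    calc ‖cf u v w p‖ / ‖ex z p + 1‖ ≤ ‖cf u v w p‖ :=
          div_le_self (norm_nonneg _) (one_le_norm_ex_add_one hz p)
      _ ≤ _ := norm_cf_le u v w p
  -- measurability
  have hmeas : ∀ p : ℕ × ℕ × ℕ, AEStronglyMeasurable
      (fun t : ℝ => cf u v w p * tpow (ex z p) t) (volume.restrict (Ioc (0:ℝ) 1)) := by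
    intro p
    apply Measurable.aestronglyMeasurable
    exact measurable_const.mul (Complex.measurable_exp.comp
      (measurable_const.mul (Complex.measurable_ofReal.comp Real.measurable_log)))
  -- lintegral bound
  have hbound : ∑' p : ℕ × ℕ × ℕ,
      ∫⁻ t in Ioc (0:ℝ) 1, ‖cf u v w p * tpow (ex z p) t‖₊ ≠ ⊤ := by
    have h1 : ∀ p : ℕ × ℕ × ℕ,
        (∫⁻ t in Ioc (0:ℝ) 1, ‖cf u v w p * tpow (ex z p) t‖₊) ≤ (‖cf u v w p‖₊ : ℝ≥0∞) := by
      intro p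
      calc ∫⁻ t in Ioc (0:ℝ) 1, (‖cf u v w p * tpow (ex z p) t‖₊ : ℝ≥0∞)
          ≤ ∫⁻ _ in Ioc (0:ℝ) 1, (‖cf u v w p‖₊ : ℝ≥0∞) := by
            refine lintegral_mono_ae ?_
            filter_upwards [ae_restrict_mem measurableSet_Ioc] with t ht
            refine ENNReal.coe_le_coe.2 ?_
            rw [← NNReal.coe_le_coe, coe_nnnorm, coe_nnnorm, norm_mul]
            exact mul_le_of_le_one_right (norm_nonneg _)
              (norm_tpow_le_one (ex_re_nonneg hz p) ht.1 ht.2)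
        _ = ‖cf u v w p‖₊ := by
            rw [setLIntegral_const, Real.volume_Ioc]
            norm_num
    refine ne_top_of_le_ne_top ?_ (ENNReal.tsum_le_tsum h1)
    rw [ENNReal.tsum_coe_ne_top_iff_summable]
    rw [← NNReal.summable_coe]
    simpa [coe_nnnorm] using hscf
  -- pointwise sum identity and exchange
  have hexch : F3 z u v w = ∑' p : ℕ × ℕ × ℕ,
      ∫ t in Ioc (0:ℝ) 1, cf u v w p * tpow (ex z p) t := by
    rw [F3, intervalIntegral.integral_of_le zero_le_one]
    rw [← MeasureTheory.integral_tsum hmeas hbound]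
    refine setIntegral_congr_fun measurableSet_Ioc (fun t ht => ?_)
    exact ((hasSum_pointwise z u v w hz hv0 hu' hv' hw' ht.1 ht.2).tsum_eq).symm
  -- evaluate each integral
  have hint : ∀ p : ℕ × ℕ × ℕ,
      (∫ t in Ioc (0:ℝ) 1, cf u v w p * tpow (ex z p) t) = cf u v w p / (ex z p + 1) := by
    intro p
    have hre : (0:ℝ) ≤ (ex z p).re := ex_re_nonneg hz p
    have hne1 : ex z p + 1 ≠ 0 := by
      intro h
      have : (ex z p + 1).re = 0 := by rw [h]; simp
      rw [Complex.add_re, Complex.one_re] at this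
      linarith
    have hcongr : ∀ t ∈ Ioc (0:ℝ) 1,
        cf u v w p * tpow (ex z p) t = cf u v w p * (t : ℂ) ^ (ex z p) := by
      intro t ht
      congr 1
      rw [tpow, Complex.cpow_def_of_ne_zero (Complex.ofReal_ne_zero.2 ht.1.ne') _,
        ← Complex.ofReal_log ht.1.le, mul_comm]
    rw [setIntegral_congr_fun measurableSet_Ioc hcongr,
      ← intervalIntegral.integral_of_le zero_le_one,
      intervalIntegral.integral_const_mul, integral_cpow (Or.inl (by linarith))]
    rw [Complex.ofReal_one, Complex.ofReal_zero, Complex.one_cpow, Complex.zero_cpow hne1]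
    rw [sub_zero, mul_one_div]
  rw [hexch]
  simp only [hint]
  -- rearrange the triple sum
  rw [Summable.tsum_prod' hsterm (fun m => hsterm.prod_factor m)]
  refine tsum_congr (fun m => ?_)
  rw [Summable.tsum_prod' (hsterm.prod_factor m) (fun n => (hsterm.prod_factor m).prod_factor n)]
  refine tsum_congr (fun n => ?_)
  refine tsum_congr (fun k => ?_)
  rw [cf, ex]
  simp only
  rw [div_div, mul_assoc, add_assoc]
end

section
/- Let n ≥ 1 be a natural number, let z be a complex number with Re(z) > 0, and let u, v, w be complex numbers with u ∈ 𝔻, w ∈ 𝔻, and v^n ∈ 𝔻'. Then F(z/n; u, v^n, w) = ∑_{α^n=1} F(z; u, vα, w), where the sum runs over all n-th roots of unity α. -/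
open Complex MeasureTheory Polynomial

lemma sum_pow_nthRoots {n m : ℕ} (hm0 : 0 < m) (hmn : m < n) :
    ∑ α ∈ nthRootsFinset n (1 : ℂ), α ^ m = 0 := by
  have hn0 : n ≠ 0 := by omega
  obtain hζ := Complex.isPrimitiveRoot_exp n hn0
  set ζ := Complex.exp (2 * Real.pi * Complex.I / n)
  have hζ0 : ζ ≠ 0 := Complex.exp_ne_zero _
  have key : ∑ α ∈ nthRootsFinset n (1 : ℂ), α ^ m
      = ∑ α ∈ nthRootsFinset n (1 : ℂ), (ζ * α) ^ m := by
    refine Finset.sum_nbij' (fun α => ζ⁻¹ * α) (fun α => ζ * α) ?_ ?_ ?_ ?_ ?_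
    · intro a ha
      rw [Polynomial.mem_nthRootsFinset (by omega)] at ha ⊢
      rw [mul_pow, ha, inv_pow, hζ.pow_eq_one, inv_one, one_mul]
    · intro a ha
      rw [Polynomial.mem_nthRootsFinset (by omega)] at ha ⊢
      rw [mul_pow, ha, hζ.pow_eq_one, one_mul]
    · intro a _; field_simp
    · intro a _; field_simp
    · intro a _
      rw [mul_inv_cancel_left₀ hζ0]
  have : (ζ ^ m - 1) * ∑ α ∈ nthRootsFinset n (1 : ℂ), α ^ m = 0 := by
    rw [sub_mul, one_mul, Finset.mul_sum]
    rw [key]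
    rw [← Finset.sum_sub_distrib]
    apply Finset.sum_eq_zero
    intro α _
    rw [mul_pow]; ring
  rcases mul_eq_zero.1 this with h | h
  · exact absurd (sub_eq_zero.1 h) (hζ.pow_ne_one_of_pos_of_lt hm0.ne' hmn)
  · exact h

lemma sum_div_sub_root {n : ℕ} (hn : 1 ≤ n) {y : ℂ} (hy : y ^ n ≠ 1) :
    ∑ α ∈ nthRootsFinset n (1 : ℂ), α / (y - α) = n / (y ^ n - 1) := by
  have hn0 : n ≠ 0 := by omega
  have hy1 : y ^ n - 1 ≠ 0 := sub_ne_zero.2 hy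
  have hcard : (nthRootsFinset n (1 : ℂ)).card = n :=
    (Complex.isPrimitiveRoot_exp n hn0).card_nthRootsFinset
  have step : ∀ α ∈ nthRootsFinset n (1 : ℂ),
      α / (y - α) = (∑ k ∈ Finset.range n, y ^ k * α ^ (n - k)) / (y ^ n - 1) := by
    intro α hα
    rw [Polynomial.mem_nthRootsFinset (by omega)] at hα
    have hyα : y - α ≠ 0 := by
      intro h
      apply hy
      rw [sub_eq_zero] at h
      rw [h, hα]
    have hg := geom_sum₂_mul y α n
    rw [hα] at hg
    rw [div_eq_div_iff hyα hy1, ← hg]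
    rw [Finset.sum_mul, Finset.mul_sum, Finset.sum_mul]
    apply Finset.sum_congr rfl
    intro k hk
    rw [Finset.mem_range] at hk
    have : α ^ (n - k) = α ^ (n - 1 - k) * α := by
      rw [← pow_succ]
      congr 1
      omega
    rw [this]; ring
  rw [Finset.sum_congr rfl step, ← Finset.sum_div]
  congr 1
  rw [Finset.sum_comm]
  rw [Finset.sum_eq_single 0]
  · rw [pow_zero]
    simp only [one_mul, Nat.sub_zero]
    have : ∀ α ∈ nthRootsFinset n (1 : ℂ), α ^ n = 1 := fun α hα =>
      (Polynomial.mem_nthRootsFinset (by omega) 1).1 hα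
    rw [Finset.sum_congr rfl this, Finset.sum_const, hcard, nsmul_eq_mul, mul_one]
  · intro k hk hk0
    rw [Finset.mem_range] at hk
    rw [← Finset.mul_sum, sum_pow_nthRoots (by omega) (by omega), mul_zero]
  · intro h
    exact absurd (Finset.mem_range.2 (by omega)) h

lemma key_alg {n : ℕ} (hn : 1 ≤ n) {v s : ℂ} (hv : v ≠ 0) (hs : s ≠ 0)
    (hvs : v ^ n * s ^ n ≠ 1) :
    ∑ α ∈ nthRootsFinset n (1 : ℂ), ((v * α)⁻¹ - s)⁻¹ = n * s ^ (n - 1) / ((v ^ n)⁻¹ - s ^ n) := by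
  have hn0 : n ≠ 0 := by omega
  set y : ℂ := (v * s)⁻¹ with hy_def
  have hvs0 : v * s ≠ 0 := mul_ne_zero hv hs
  have hyn : y ^ n ≠ 1 := by
    rw [hy_def, inv_pow, mul_pow]
    intro h
    rw [inv_eq_one] at h
    exact hvs h
  have step : ∀ α ∈ nthRootsFinset n (1 : ℂ), ((v * α)⁻¹ - s)⁻¹ = s⁻¹ * (α / (y - α)) := by
    intro α hα
    have hα1 : α ^ n = 1 := (Polynomial.mem_nthRootsFinset (by omega) 1).1 hα
    have hα0 : α ≠ 0 := by
      intro h; rw [h, zero_pow hn0] at hα1; exact zero_ne_one hα1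
    have hyα : y - α ≠ 0 := by
      intro h
      rw [sub_eq_zero] at h
      exact hyn (by rw [h, hα1])
    have hden : 1 - v * α * s ≠ 0 := by
      intro h
      apply hyα
      rw [sub_eq_zero, hy_def]
      have h' : (v * s) * α = 1 := by linear_combination -h
      exact (inv_eq_of_mul_eq_one_right h')
    rw [hy_def] at hyα ⊢
    have hX : -(v * α * s ^ 2) + s ≠ 0 := by
      rw [show -(v * α * s ^ 2) + s = s * (1 - v * α * s) by ring]
      exact mul_ne_zero hs hden
    field_simp
  rw [Finset.sum_congr rfl step, ← Finset.mul_sum, sum_div_sub_root hn hyn]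
  have h1 : y ^ n - 1 ≠ 0 := sub_ne_zero.2 hyn
  have hvn : (v : ℂ) ^ n ≠ 0 := pow_ne_zero _ hv
  have h2 : (v ^ n)⁻¹ - s ^ n ≠ 0 := by
    intro h
    apply hvs
    rw [sub_eq_zero] at h
    rw [← h, mul_inv_cancel₀ hvn]
  obtain ⟨m, rfl⟩ : ∃ m, n = m + 1 := ⟨n - 1, by omega⟩
  rw [hy_def] at h1 ⊢
  simp only [Nat.add_sub_cancel]
  field_simp at h1 h2 ⊢
  rw [div_pow, one_pow, mul_pow]
  field_simp
  ring

open Set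

lemma tpow_abs {z : ℂ} {t : ℝ} (ht : 0 < t) : ‖tpow z t‖ = t ^ z.re := by
  rw [tpow, Complex.norm_exp, Real.rpow_def_of_pos ht]
  congr 1
  simp [Complex.mul_re]
  ring

lemma tpow_pow {z : ℂ} {n : ℕ} (hn : n ≠ 0) {s : ℝ} (hs : 0 < s) :
    tpow (z / n) (s ^ n) = tpow z s := by
  rw [tpow, tpow, Real.log_pow]
  congr 1
  push_cast
  have : (n : ℂ) ≠ 0 := Nat.cast_ne_zero.2 hn
  field_simp

lemma log_norm_bound {ζ : ℂ} (h : ‖ζ‖ < 1) :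
    ‖Complex.log (1 - ζ)‖ ≤ 5 - Real.log (1 - ‖ζ‖) := by
  have h0 : 0 < 1 - ‖ζ‖ := by linarith
  have hζ0 : 0 ≤ ‖ζ‖ := norm_nonneg _
  have hlow : 1 - ‖ζ‖ ≤ ‖1 - ζ‖ := by
    have := norm_sub_norm_le (1:ℂ) ζ
    simpa using this
  have hhi : ‖1 - ζ‖ ≤ 2 := by
    calc ‖1 - ζ‖ ≤ ‖(1:ℂ)‖ + ‖ζ‖ := by
          simpa using norm_sub_le (1:ℂ) ζ
    _ ≤ 2 := by simp only [norm_one]; linarith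
  have hpos : 0 < ‖1 - ζ‖ := lt_of_lt_of_le h0 hlow
  have hre : |(Complex.log (1 - ζ)).re| ≤ 1 - Real.log (1 - ‖ζ‖) := by
    rw [Complex.log_re]
    have hlogle : Real.log (1 - ‖ζ‖) ≤ 0 := Real.log_nonpos (by linarith) (by linarith)
    rcases le_or_gt 1 (‖1 - ζ‖) with h1 | h1
    · rw [_root_.abs_of_nonneg (Real.log_nonneg h1)]
      have : Real.log (‖1 - ζ‖) ≤ Real.log 2 := Real.log_le_log hpos hhi
      have h2 : Real.log 2 ≤ 1 := by
        have := Real.log_two_lt_d9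
        linarith
      linarith
    · rw [_root_.abs_of_nonpos (Real.log_nonpos hpos.le (le_of_lt h1))]
      have : Real.log (1 - ‖ζ‖) ≤ Real.log (‖1 - ζ‖) :=
        Real.log_le_log h0 hlow
      linarith
  have him : |(Complex.log (1 - ζ)).im| ≤ 4 := by
    rw [Complex.log_im]
    have := Complex.abs_arg_le_pi (1 - ζ)
    have := Real.pi_lt_d2
    linarith
  calc ‖Complex.log (1 - ζ)‖ ≤ |(Complex.log (1 - ζ)).re| + |(Complex.log (1 - ζ)).im| :=
        Complex.norm_le_abs_re_add_abs_im _
    _ ≤ 5 - Real.log (1 - ‖ζ‖) := by linarith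

lemma one_sub_rpow_ge {r t : ℝ} (hr : 0 < r) (ht : 0 < t) (ht1 : t < 1) :
    min r 1 * (1 - t) ≤ 1 - t ^ r := by
  have h1t : (0:ℝ) ≤ 1 - t := by linarith
  rcases le_or_gt r 1 with h | h
  · have hb : t ^ r ≤ 1 + r * (t - 1) := by
      have := rpow_one_add_le_one_add_mul_self (s := t - 1) (by linarith) (le_of_lt hr) h
      simpa using this
    have : min r 1 ≤ r := min_le_left _ _
    nlinarith
  · have hb : t ^ r ≤ t ^ (1:ℝ) := Real.rpow_le_rpow_of_exponent_ge ht (le_of_lt ht1) (le_of_lt h)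
    rw [Real.rpow_one] at hb
    have : min r 1 ≤ 1 := min_le_right _ _
    nlinarith

lemma sq_log_bound {r t : ℝ} (hr : 0 < r) (ht : 0 < t) (ht1 : t < 1) :
    5 - Real.log (1 - t ^ r) ≤ (9 - Real.log (min r 1)) * (1 - t) ^ (-(4⁻¹) : ℝ) := by
  set c := min r 1 with hc
  have hc0 : 0 < c := lt_min hr one_pos
  have hc1 : c ≤ 1 := min_le_right _ _
  have h1t : 0 < 1 - t := by linarith
  have hkey : c * (1 - t) ≤ 1 - t ^ r := one_sub_rpow_ge hr ht ht1
  have hlog1 : Real.log (c * (1 - t)) ≤ Real.log (1 - t ^ r) :=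
    Real.log_le_log (by positivity) hkey
  rw [Real.log_mul (ne_of_gt hc0) (ne_of_gt h1t)] at hlog1
  have hlogc : Real.log c ≤ 0 := Real.log_nonpos (le_of_lt hc0) hc1
  have hloginv : -Real.log (1 - t) ≤ 4 * (1 - t) ^ (-(4⁻¹) : ℝ) := by
    rw [← Real.log_inv]
    have := Real.log_le_rpow_div (x := (1 - t)⁻¹) (ε := 4⁻¹) (by positivity) (by norm_num)
    rw [Real.inv_rpow (le_of_lt h1t), ← Real.rpow_neg (le_of_lt h1t)] at this
    calc Real.log (1 - t)⁻¹ ≤ (1 - t) ^ (-(4⁻¹):ℝ) / 4⁻¹ := this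
      _ = 4 * (1 - t) ^ (-(4⁻¹):ℝ) := by ring
  have hone : (1:ℝ) ≤ (1 - t) ^ (-(4⁻¹) : ℝ) :=
    Real.one_le_rpow_of_pos_of_le_one_of_nonpos h1t (by linarith) (by norm_num)
  nlinarith [hlog1, hloginv, hone, hlogc]

lemma denom_bound {c : ℂ} (hc : 1 ≤ ‖c‖) (hc1 : c ≠ 1) :
    ∃ δ : ℝ, 0 < δ ∧ ∀ t ∈ Icc (0:ℝ) 1, δ ≤ ‖c - t‖ := by
  have hcont : ContinuousOn (fun t : ℝ => ‖c - t‖) (Icc 0 1) :=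
    (continuous_norm.comp (continuous_const.sub Complex.continuous_ofReal)).continuousOn
  obtain ⟨t₀, ht₀, hmin⟩ := isCompact_Icc.exists_isMinOn (nonempty_Icc.2 zero_le_one) hcont
  refine ⟨‖c - t₀‖, ?_, fun t ht => hmin ht⟩
  rcases lt_or_eq_of_le (norm_nonneg (c - t₀)) with h | h
  · exact h
  exfalso
  have hct : c = (t₀ : ℂ) := sub_eq_zero.1 (norm_eq_zero.1 h.symm)
  have h1 : |t₀| ≥ 1 := by
    rw [hct] at hc
    simpa using hc
  have ht1 : t₀ = 1 := by
    rcases ht₀ with ⟨h0, h1'⟩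
    rw [_root_.abs_of_nonneg h0] at h1
    linarith
  apply hc1
  rw [hct, ht1, Complex.ofReal_one]

lemma majorant_integrable (K δ : ℝ) :
    IntegrableOn (fun t : ℝ => K / δ * (1 - t) ^ (-(2⁻¹) : ℝ)) (Ioo (0:ℝ) 1) volume := by
  have i1 : IntervalIntegrable (fun x : ℝ => x ^ (-(2⁻¹) : ℝ)) volume 0 1 :=
    intervalIntegral.intervalIntegrable_rpow' (by norm_num)
  have i2 := (i1.comp_sub_left 1).symm
  norm_num at i2
  have i3 := i2.const_mul (K / δ)
  have : (fun t : ℝ => K / δ * (1 - t) ^ (-(2⁻¹) : ℝ))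
      = fun t : ℝ => K / δ * (1 - t) ^ (-(1/2) : ℝ) := by norm_num
  rw [this]
  exact (intervalIntegrable_iff_integrableOn_Ioo_of_le zero_le_one).1 i3

lemma continuousOn_piece {z u w c : ℂ} (hu1 : ‖u‖ ≤ 1) (hw1 : ‖w‖ ≤ 1)
    (hz : 0 < z.re) (hc : ∀ t ∈ Icc (0:ℝ) 1, c - (t:ℂ) ≠ 0) :
    ContinuousOn (fun t : ℝ =>
      Complex.log (1 - u * tpow z t) * Complex.log (1 - w * tpow z t) / (c - (t : ℂ)))
      (Ioo 0 1) := by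
  have hT : ContinuousOn (fun t : ℝ => tpow z t) (Ioo 0 1) := by
    apply Complex.continuous_exp.comp_continuousOn
    exact continuousOn_const.mul (Complex.continuous_ofReal.comp_continuousOn
      (Real.continuousOn_log.mono (fun x hx => ne_of_gt hx.1)))
  have hmem : ∀ (a : ℂ), ‖a‖ ≤ 1 → ∀ t ∈ Ioo (0:ℝ) 1,
      (1 - a * tpow z t) ∈ Complex.slitPlane := by
    intro a ha t ht
    rw [Complex.mem_slitPlane_iff]
    left
    have habs : ‖a * tpow z t‖ < 1 := by
      rw [norm_mul, tpow_abs ht.1]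
      have h1 : t ^ z.re < 1 := Real.rpow_lt_one (le_of_lt ht.1) ht.2 hz
      have h2 : 0 < t ^ z.re := Real.rpow_pos_of_pos ht.1 _
      nlinarith [norm_nonneg a]
    have hre : (1 - a * tpow z t).re = 1 - (a * tpow z t).re := by
      simp [Complex.sub_re]
    rw [hre]
    linarith [Complex.re_le_norm (a * tpow z t)]
  have h1 : ContinuousOn (fun t : ℝ => Complex.log (1 - u * tpow z t)) (Ioo 0 1) :=
    (continuousOn_const.sub (continuousOn_const.mul hT)).clog (hmem u hu1)
  have h2 : ContinuousOn (fun t : ℝ => Complex.log (1 - w * tpow z t)) (Ioo 0 1) :=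
    (continuousOn_const.sub (continuousOn_const.mul hT)).clog (hmem w hw1)
  exact (h1.mul h2).div
    (continuousOn_const.sub (Complex.continuous_ofReal.continuousOn))
    (fun t ht => hc t (Ioo_subset_Icc_self ht))

lemma integrable_piece {z u w c : ℂ} (hz : 0 < z.re)
    (hu1 : ‖u‖ ≤ 1) (hw1 : ‖w‖ ≤ 1)
    (hc : 1 ≤ ‖c‖) (hc1 : c ≠ 1) :
    IntervalIntegrable (fun t : ℝ =>
      Complex.log (1 - u * tpow z t) * Complex.log (1 - w * tpow z t) / (c - (t : ℂ)))
      volume 0 1 := by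
  obtain ⟨δ, hδ0, hδ⟩ := denom_bound hc hc1
  have hcne : ∀ t ∈ Icc (0:ℝ) 1, c - (t:ℂ) ≠ 0 := by
    intro t ht h
    have := hδ t ht
    rw [h] at this
    simp at this
    linarith
  set r := z.re with hr
  set K := (9 - Real.log (min r 1)) ^ 2 with hK
  rw [intervalIntegrable_iff_integrableOn_Ioo_of_le zero_le_one]
  apply MeasureTheory.Integrable.mono (majorant_integrable K δ)
  · exact (continuousOn_piece hu1 hw1 hz hcne).aestronglyMeasurable measurableSet_Ioo
  · rw [ae_restrict_iff' measurableSet_Ioo]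
    apply Filter.Eventually.of_forall
    intro t ht
    have h1t : 0 < 1 - t := by have := ht.2; linarith
    have hr4 : 0 < (1 - t) ^ (-(4⁻¹):ℝ) := Real.rpow_pos_of_pos h1t _
    have hr2 : 0 < (1 - t) ^ (-(2⁻¹):ℝ) := Real.rpow_pos_of_pos h1t _
    have htr1 : t ^ r < 1 := Real.rpow_lt_one (le_of_lt ht.1) ht.2 hz
    have htr0 : 0 < t ^ r := Real.rpow_pos_of_pos ht.1 _
    have hbound : ∀ (a : ℂ), ‖a‖ ≤ 1 →
        ‖Complex.log (1 - a * tpow z t)‖ ≤ 5 - Real.log (1 - t ^ r) := by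
      intro a ha
      have habs : ‖a * tpow z t‖ < 1 := by
        rw [norm_mul, tpow_abs ht.1]
        nlinarith [norm_nonneg a]
      have h1 := log_norm_bound habs
      have h2 : 1 - t ^ r ≤ 1 - ‖a * tpow z t‖ := by
        rw [norm_mul, tpow_abs ht.1]
        nlinarith [norm_nonneg a]
      have h3 : Real.log (1 - t ^ r) ≤ Real.log (1 - ‖a * tpow z t‖) :=
        Real.log_le_log (by linarith) h2
      linarith
    have hA0 : 0 ≤ 5 - Real.log (1 - t ^ r) := by
      have : Real.log (1 - t ^ r) ≤ 0 := Real.log_nonpos (by linarith) (by linarith)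
      linarith
    have hnum : ‖Complex.log (1 - u * tpow z t) * Complex.log (1 - w * tpow z t)‖
        ≤ (5 - Real.log (1 - t ^ r)) ^ 2 := by
      rw [norm_mul, sq]
      exact mul_le_mul (hbound u hu1) (hbound w hw1) (norm_nonneg _) hA0
    have hden : δ ≤ ‖c - t‖ := hδ t (Ioo_subset_Icc_self ht)
    have hsq : (5 - Real.log (1 - t ^ r)) ^ 2 ≤ K * (1 - t) ^ (-(2⁻¹) : ℝ) := by
      have h1 := sq_log_bound hz ht.1 ht.2
      have h2 : ((1 - t) ^ (-(4⁻¹) : ℝ)) ^ 2 = (1 - t) ^ (-(2⁻¹) : ℝ) := by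
        rw [← Real.rpow_natCast ((1 - t) ^ (-(4⁻¹) : ℝ)) 2, ← Real.rpow_mul (by linarith)]
        norm_num
      have h3 : (0:ℝ) ≤ (9 - Real.log (min r 1)) := by
        have : Real.log (min r 1) ≤ 0 :=
          Real.log_nonpos (lt_min hz one_pos).le (min_le_right _ _)
        linarith
      calc (5 - Real.log (1 - t ^ r)) ^ 2
          ≤ ((9 - Real.log (min r 1)) * (1 - t) ^ (-(4⁻¹) : ℝ)) ^ 2 := by
            apply sq_le_sq'
            · nlinarith
            · exact h1
        _ = K * (1 - t) ^ (-(2⁻¹) : ℝ) := by rw [mul_pow, h2]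
    rw [norm_div]
    calc ‖Complex.log (1 - u * tpow z t) * Complex.log (1 - w * tpow z t)‖ / ‖(c - (t:ℂ))‖
        ≤ (K * (1 - t) ^ (-(2⁻¹) : ℝ)) / δ := by
          apply div_le_div₀ (mul_nonneg (sq_nonneg _) hr2.le) (le_trans hnum hsq) hδ0
          exact hden
      _ = K / δ * (1 - t) ^ (-(2⁻¹) : ℝ) := by ring
      _ ≤ ‖K / δ * (1 - t) ^ (-(2⁻¹) : ℝ)‖ := le_abs_self _

lemma pow_image {n : ℕ} (hn0 : n ≠ 0) : (fun s : ℝ => s ^ n) '' Ioo 0 1 = Ioo 0 1 := by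
  ext x
  constructor
  · rintro ⟨s, ⟨hs0, hs1⟩, rfl⟩
    exact ⟨pow_pos hs0 n, pow_lt_one₀ (le_of_lt hs0) hs1 hn0⟩
  · rintro ⟨hx0, hx1⟩
    have hnR : (n:ℝ) ≠ 0 := Nat.cast_ne_zero.2 hn0
    refine ⟨x ^ ((n:ℝ)⁻¹), ⟨Real.rpow_pos_of_pos hx0 _,
      Real.rpow_lt_one hx0.le hx1 (by positivity)⟩, ?_⟩
    show (x ^ ((n:ℝ)⁻¹)) ^ n = x
    rw [← Real.rpow_natCast (x ^ ((n:ℝ)⁻¹)) n, ← Real.rpow_mul hx0.le,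
      inv_mul_cancel₀ hnR, Real.rpow_one]

theorem statement5 (n : ℕ) (hn : 1 ≤ n) (z u v w : ℂ) (hz : 0 < z.re)
    (hu0 : u ≠ 0) (hu1 : ‖u‖ ≤ 1)
    (hw0 : w ≠ 0) (hw1 : ‖w‖ ≤ 1)
    (hvn0 : v ^ n ≠ 0) (hvn1 : ‖v ^ n‖ ≤ 1) (hvn2 : v ^ n ≠ 1) :
    F3 (z / (n : ℂ)) u (v ^ n) w =
      ∑ α ∈ nthRootsFinset n (1 : ℂ), F3 z u (v * α) w := by
  have hn0 : n ≠ 0 := by omega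
  have hnC : (n:ℂ) ≠ 0 := Nat.cast_ne_zero.2 hn0
  have hv0 : v ≠ 0 := by
    intro h; exact hvn0 (by rw [h, zero_pow hn0])
  have hv1 : ‖v‖ ≤ 1 := by
    have h : ‖v‖ ^ n ≤ 1 := by rw [← norm_pow]; exact hvn1
    exact (pow_le_one_iff_of_nonneg (norm_nonneg v) hn0).1 h
  have hroot : ∀ α ∈ nthRootsFinset n (1 : ℂ), α ^ n = 1 := fun α hα =>
    (Polynomial.mem_nthRootsFinset (by omega) 1).1 hα
  have habs_root : ∀ α ∈ nthRootsFinset n (1 : ℂ), ‖α‖ = 1 := by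
    intro α hα
    have h : ‖α‖ ^ n = 1 := by
      rw [← norm_pow, hroot α hα, norm_one]
    rcases lt_trichotomy (‖α‖) 1 with h1 | h1 | h1
    · have := pow_lt_one₀ (norm_nonneg α) h1 hn0; linarith
    · exact h1
    · have := one_lt_pow₀ h1 hn0; linarith
  have hvα1 : ∀ α ∈ nthRootsFinset n (1 : ℂ), v * α ≠ 1 := by
    intro α hα h
    apply hvn2
    have : (v * α) ^ n = 1 := by rw [h, one_pow]
    rw [mul_pow, hroot α hα, mul_one] at this
    exact this
  have hvα0 : ∀ α ∈ nthRootsFinset n (1 : ℂ), v * α ≠ 0 := by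
    intro α hα
    apply mul_ne_zero hv0
    intro h
    have := habs_root α hα
    rw [h] at this
    simp at this
  have hcα : ∀ α ∈ nthRootsFinset n (1 : ℂ), 1 ≤ ‖(v * α)⁻¹‖ := by
    intro α hα
    rw [norm_inv]
    have h1 : ‖v * α‖ ≤ 1 := by
      rw [norm_mul, habs_root α hα, mul_one]; exact hv1
    have h2 : 0 < ‖v * α‖ := norm_pos_iff.2 (hvα0 α hα)
    exact (one_le_inv₀ h2).2 h1
  have hcα1 : ∀ α ∈ nthRootsFinset n (1 : ℂ), ((v * α)⁻¹ : ℂ) ≠ 1 := by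
    intro α hα h
    rw [inv_eq_one] at h
    exact hvα1 α hα h
  have hint : ∀ α ∈ nthRootsFinset n (1 : ℂ), IntervalIntegrable (fun t : ℝ =>
      Complex.log (1 - u * tpow z t) * Complex.log (1 - w * tpow z t) / ((v * α)⁻¹ - (t : ℂ)))
      volume 0 1 := fun α hα => integrable_piece hz hu1 hw1 (hcα α hα) (hcα1 α hα)
  unfold F3
  rw [← intervalIntegral.integral_finset_sum hint]
  rw [intervalIntegral.integral_of_le zero_le_one, intervalIntegral.integral_of_le zero_le_one,
    integral_Ioc_eq_integral_Ioo, integral_Ioc_eq_integral_Ioo]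
  have hder : ∀ x ∈ Ioo (0:ℝ) 1, HasDerivWithinAt (fun s : ℝ => s ^ n)
      ((n:ℝ) * x ^ (n-1)) (Ioo 0 1) x := fun x _ => (hasDerivAt_pow n x).hasDerivWithinAt
  have hinj : InjOn (fun s : ℝ => s ^ n) (Ioo 0 1) :=
    ((pow_left_strictMonoOn₀ hn0).injOn).mono (fun x (hx : x ∈ Ioo (0:ℝ) 1) => le_of_lt hx.1)
  have hsub := integral_image_eq_integral_abs_deriv_smul measurableSet_Ioo hder hinj
    (fun t : ℝ => Complex.log (1 - u * tpow (z / (n:ℂ)) t) *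
      Complex.log (1 - w * tpow (z / (n:ℂ)) t) / ((v ^ n)⁻¹ - (t : ℂ)))
  rw [pow_image hn0] at hsub
  rw [hsub]
  apply setIntegral_congr_fun measurableSet_Ioo
  intro s hs
  obtain ⟨hs0, hs1⟩ := hs
  have hsC : (s:ℂ) ≠ 0 := Complex.ofReal_ne_zero.2 (ne_of_gt hs0)
  have hsn1 : s ^ n < 1 := pow_lt_one₀ (le_of_lt hs0) hs1 hn0
  have hsn0 : 0 < s ^ n := pow_pos hs0 n
  have hvs : v ^ n * (s:ℂ) ^ n ≠ 1 := by
    intro h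
    have habs : ‖v ^ n * (s:ℂ) ^ n‖ < 1 := by
      rw [norm_mul, norm_pow, norm_pow, Complex.norm_real, Real.norm_eq_abs, _root_.abs_of_pos hs0]
      have hb : ‖v‖ ^ n ≤ 1 := pow_le_one₀ (norm_nonneg v) hv1
      nlinarith [pow_nonneg (norm_nonneg v) n]
    rw [h, norm_one] at habs
    exact lt_irrefl _ habs
  simp only
  rw [tpow_pow hn0 hs0]
  have hcast : ((s ^ n : ℝ) : ℂ) = (s : ℂ) ^ n := by push_cast; ring
  rw [hcast]
  rw [_root_.abs_of_nonneg (by positivity : (0:ℝ) ≤ (n:ℝ) * s ^ (n-1))]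
  rw [Complex.real_smul]
  have hsum : ∑ α ∈ nthRootsFinset n (1 : ℂ),
      Complex.log (1 - u * tpow z s) * Complex.log (1 - w * tpow z s) / ((v * α)⁻¹ - (s:ℂ))
      = Complex.log (1 - u * tpow z s) * Complex.log (1 - w * tpow z s) *
        ((n:ℂ) * (s:ℂ) ^ (n-1) / ((v ^ n)⁻¹ - (s:ℂ) ^ n)) := by
    rw [← key_alg hn hv0 hsC hvs, Finset.mul_sum]
    apply Finset.sum_congr rfl
    intro α _
    rw [div_eq_mul_inv]
  rw [hsum]
  push_cast
  ring
end
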